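/- First part of Proposition 1 (WL_RobBoost implies WL_MRBoost): Let H be a set of classifiers h : ℝ^d → Fin K such that for every h ∈ H, x ∈ ℝ^d and j ∈ Fin K the set {δ ∈ ℝ^d : h(x+δ) = j} is Borel, and let τ > 0. Suppose that for every probability distribution P' on the finite set S̃_aug there exists h ∈ H with E_{(x,y,y')∼P'}[1[∀ δ ∈ B(ε): h(x+δ) = y]] ≥ E_{(x,y,y')∼P'}[1[∃ δ ∈ B(ε): h(x+δ) = y']] + τ (the weak learning condition of RobBoost). Then for every probability measure P'' on S̃_aug × B(ε) there exists h ∈ H with E_{(x,y,y',δ)∼P''}[1[h(x+δ) = y]] ≥ E_{(x,y,y',δ)∼P''}[1[h(x+δ) = y']] + τ (the weak learning condition of MRBoost). -/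

import Mathlib

open MeasureTheory Classical

/-- First part of Proposition 1: the weak learning condition of RobBoost implies the
margin weak learning condition of MRBoost, with the same constant `τ`. -/
theorem wl_robboost_implies_wl_mrboost
    (d K : ℕ) (hd : 1 ≤ d) (hK : 2 ≤ K)
    (S : Finset ((Fin d → ℝ) × Fin K)) (hS : S.Nonempty)
    (B : Set (Fin d → ℝ)) (hB : B.Nonempty) (hBmeas : MeasurableSet B)
    (H : Set ((Fin d → ℝ) → Fin K))
    (hH : ∀ h ∈ H, ∀ (x : Fin d → ℝ) (j : Fin K),
      MeasurableSet {δ : Fin d → ℝ | h (x + δ) = j})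
    (τ : ℝ) (hτ : 0 < τ)
    -- the weak learning condition of RobBoost, over distributions on the finite set S̃_aug
    (hWL : ∀ w : ((Fin d → ℝ) × Fin K) × Fin K → ℝ,
      (∀ q, 0 ≤ w q) →
      (∑ q ∈ (S ×ˢ (Finset.univ : Finset (Fin K))).filter (fun q => q.2 ≠ q.1.2), w q) = 1 →
      ∃ h ∈ H,
        (∑ q ∈ (S ×ˢ (Finset.univ : Finset (Fin K))).filter (fun q => q.2 ≠ q.1.2),
          w q * (if ∀ δ ∈ B, h (q.1.1 + δ) = q.1.2 then (1 : ℝ) else 0)) ≥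
        (∑ q ∈ (S ×ˢ (Finset.univ : Finset (Fin K))).filter (fun q => q.2 ≠ q.1.2),
          w q * (if ∃ δ ∈ B, h (q.1.1 + δ) = q.2 then (1 : ℝ) else 0)) + τ) :
    -- the weak learning condition of MRBoost, over distributions on S̃_aug × B(ε)
    ∀ P'' : Measure ((((Fin d → ℝ) × Fin K) × Fin K) × (Fin d → ℝ)),
      IsProbabilityMeasure P'' →
      P'' {q | q.1.1 ∈ S ∧ q.1.2 ≠ q.1.1.2 ∧ q.2 ∈ B} = 1 →
      ∃ h ∈ H, (P'' {q | h (q.1.1.1 + q.2) = q.1.1.2}).toReal ≥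
        (P'' {q | h (q.1.1.1 + q.2) = q.1.2}).toReal + τ := by
  intro P'' hProb hPA
  set Q : Finset (((Fin d → ℝ) × Fin K) × Fin K) :=
    (S ×ˢ (Finset.univ : Finset (Fin K))).filter (fun q => q.2 ≠ q.1.2) with hQdef
  set A : Set ((((Fin d → ℝ) × Fin K) × Fin K) × (Fin d → ℝ)) :=
    {q | q.1.1 ∈ S ∧ q.1.2 ≠ q.1.1.2 ∧ q.2 ∈ B} with hAdef
  set F : ((Fin d → ℝ) × Fin K) × Fin K →
      Set ((((Fin d → ℝ) × Fin K) × Fin K) × (Fin d → ℝ)) :=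
    fun q => {p | p.1 = q ∧ p.2 ∈ B} with hFdef
  have hFmeas : ∀ q, MeasurableSet (F q) := by
    intro q
    have h1 : F q = (Prod.fst ⁻¹' {q}) ∩ (Prod.snd ⁻¹' B) := by
      ext p
      constructor
      · rintro ⟨h1, h2⟩; exact ⟨h1, h2⟩
      · rintro ⟨h1, h2⟩; exact ⟨h1, h2⟩
    rw [h1]
    exact ((measurableSet_singleton q).preimage measurable_fst).inter
      (hBmeas.preimage measurable_snd)
  have hmemQ : ∀ q, q ∈ Q ↔ q.1 ∈ S ∧ q.2 ≠ q.1.2 := by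
    intro q
    simp [hQdef, Finset.mem_filter, Finset.mem_product]
  have hAunion : A = ⋃ q ∈ Q, F q := by
    ext p
    simp only [hAdef, Set.mem_setOf_eq, Set.mem_iUnion, hFdef]
    constructor
    · rintro ⟨h1, h2, h3⟩
      exact ⟨p.1, (hmemQ p.1).2 ⟨h1, h2⟩, rfl, h3⟩
    · rintro ⟨q, hq, rfl, h3⟩
      obtain ⟨h1, h2⟩ := (hmemQ p.1).1 hq
      exact ⟨h1, h2, h3⟩
  have hdisj : ∀ T : Finset (((Fin d → ℝ) × Fin K) × Fin K),
      (T : Set _).PairwiseDisjoint F := by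
    intro T q hq q' hq' hne
    refine Set.disjoint_left.2 ?_
    rintro p ⟨h1, -⟩ ⟨h2, -⟩
    exact hne (h1.symm.trans h2)
  have hsum : ∀ T : Finset (((Fin d → ℝ) × Fin K) × Fin K),
      P'' (⋃ q ∈ T, F q) = ∑ q ∈ T, P'' (F q) := by
    intro T
    exact measure_biUnion_finset (hdisj T) (fun q _ => hFmeas q)
  have hAmeas : MeasurableSet A := by
    rw [hAunion]; exact Finset.measurableSet_biUnion Q (fun q _ => hFmeas q)
  have hfin : ∀ s : Set ((((Fin d → ℝ) × Fin K) × Fin K) × (Fin d → ℝ)), P'' s ≠ ⊤ :=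
    fun s => measure_ne_top P'' s
  -- the weights
  set w : ((Fin d → ℝ) × Fin K) × Fin K → ℝ := fun q => (P'' (F q)).toReal with hwdef
  have hwpos : ∀ q, 0 ≤ w q := fun q => ENNReal.toReal_nonneg
  have hwsum : ∑ q ∈ Q, w q = 1 := by
    have : ∑ q ∈ Q, w q = (∑ q ∈ Q, P'' (F q)).toReal := by
      rw [ENNReal.toReal_sum (fun q _ => hfin _)]
    rw [this, ← hsum Q, ← hAunion, hPA, ENNReal.toReal_one]
  obtain ⟨h, hhH, hineq⟩ := hWL w hwpos hwsum
  refine ⟨h, hhH, ?_⟩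
  -- upper bound on the y' term
  have hAc : P'' Aᶜ = 0 := by
    rw [measure_compl hAmeas (hfin A), hPA, measure_univ, tsub_self]
  set Q2 : Finset (((Fin d → ℝ) × Fin K) × Fin K) :=
    Q.filter (fun q => ∃ δ ∈ B, h (q.1.1 + δ) = q.2) with hQ2def
  have hsub2 : {p : (((Fin d → ℝ) × Fin K) × Fin K) × (Fin d → ℝ) |
      h (p.1.1.1 + p.2) = p.1.2} ∩ A ⊆ ⋃ q ∈ Q2, F q := by
    rintro p ⟨hp, hpA⟩
    rw [hAunion] at hpA
    simp only [Set.mem_iUnion] at hpA ⊢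
    obtain ⟨q, hq, hpq⟩ := hpA
    obtain ⟨rfl, hpB⟩ := hpq
    exact ⟨p.1, Finset.mem_filter.2 ⟨hq, ⟨p.2, hpB, hp⟩⟩, rfl, hpB⟩
  have hle2 : (P'' {p : (((Fin d → ℝ) × Fin K) × Fin K) × (Fin d → ℝ) |
      h (p.1.1.1 + p.2) = p.1.2}).toReal ≤
      ∑ q ∈ Q, w q * (if ∃ δ ∈ B, h (q.1.1 + δ) = q.2 then (1 : ℝ) else 0) := by
    have e0 : ∑ q ∈ Q, (if ∃ δ ∈ B, h (q.1.1 + δ) = q.2 then w q else (0 : ℝ))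
        = ∑ q ∈ Q2, w q := (Finset.sum_filter _ w).symm
    have e1 : ∑ q ∈ Q, w q * (if ∃ δ ∈ B, h (q.1.1 + δ) = q.2 then (1 : ℝ) else 0)
        = ∑ q ∈ Q2, w q := by
      rw [← e0]
      exact Finset.sum_congr rfl (fun q _ => by
        by_cases hc : ∃ δ ∈ B, h (q.1.1 + δ) = q.2 <;> simp [hc])
    rw [e1]
    have e2 : ∑ q ∈ Q2, w q = (P'' (⋃ q ∈ Q2, F q)).toReal := by
      rw [hsum Q2, ENNReal.toReal_sum (fun q _ => hfin _)]
    rw [e2]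
    have hT : P'' {p : (((Fin d → ℝ) × Fin K) × Fin K) × (Fin d → ℝ) |
        h (p.1.1.1 + p.2) = p.1.2} ≤ P'' (⋃ q ∈ Q2, F q) := by
      calc P'' {p : (((Fin d → ℝ) × Fin K) × Fin K) × (Fin d → ℝ) |
            h (p.1.1.1 + p.2) = p.1.2}
          ≤ P'' ({p : (((Fin d → ℝ) × Fin K) × Fin K) × (Fin d → ℝ) |
            h (p.1.1.1 + p.2) = p.1.2} ∩ A) + P'' Aᶜ := by
            refine le_trans (measure_mono ?_) (measure_union_le _ _)
            intro p hp
            by_cases hpa : p ∈ A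
            · exact Or.inl ⟨hp, hpa⟩
            · exact Or.inr hpa
        _ = P'' ({p : (((Fin d → ℝ) × Fin K) × Fin K) × (Fin d → ℝ) |
            h (p.1.1.1 + p.2) = p.1.2} ∩ A) := by rw [hAc, add_zero]
        _ ≤ P'' (⋃ q ∈ Q2, F q) := measure_mono hsub2
    exact ENNReal.toReal_mono (hfin _) hT
  -- lower bound on the y term
  set Q1 : Finset (((Fin d → ℝ) × Fin K) × Fin K) :=
    Q.filter (fun q => ∀ δ ∈ B, h (q.1.1 + δ) = q.1.2) with hQ1def
  have hle1 : ∑ q ∈ Q, w q * (if ∀ δ ∈ B, h (q.1.1 + δ) = q.1.2 then (1 : ℝ) else 0) ≤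
      (P'' {p : (((Fin d → ℝ) × Fin K) × Fin K) × (Fin d → ℝ) |
        h (p.1.1.1 + p.2) = p.1.1.2}).toReal := by
    have e0 : ∑ q ∈ Q, (if ∀ δ ∈ B, h (q.1.1 + δ) = q.1.2 then w q else (0 : ℝ))
        = ∑ q ∈ Q1, w q := (Finset.sum_filter _ w).symm
    have e1 : ∑ q ∈ Q, w q * (if ∀ δ ∈ B, h (q.1.1 + δ) = q.1.2 then (1 : ℝ) else 0)
        = ∑ q ∈ Q1, w q := by
      rw [← e0]
      exact Finset.sum_congr rfl (fun q _ => by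
        by_cases hc : ∀ δ ∈ B, h (q.1.1 + δ) = q.1.2 <;> simp [hc])
    have e2 : ∑ q ∈ Q1, w q = (P'' (⋃ q ∈ Q1, F q)).toReal := by
      rw [hsum Q1, ENNReal.toReal_sum (fun q _ => hfin _)]
    rw [e1, e2]
    refine ENNReal.toReal_mono (hfin _) (measure_mono ?_)
    intro p hp
    simp only [Set.mem_iUnion] at hp
    obtain ⟨q, hq, hpq⟩ := hp
    obtain ⟨rfl, hpB⟩ := hpq
    exact (Finset.mem_filter.1 hq).2 p.2 hpB
  linarith [hineq]
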